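/- Let X = ℝⁿ with the Euclidean distance and Lebesgue measure μ, let 0 ≤ α < n, and let E ⊂ ℝⁿ be nonempty. Assume E is porous and the function y ↦ dist(y,E)^{-α} is locally integrable. If for every ε > 0 there exists δ > 0 such that (1/μ(B(z,R))) ∫_{B(z,R)} 1_K(y) dist(y,E)^{-α} dy ≤ ε R^{-α} whenever z ∈ E, R > 0, and K ⊂ ℝⁿ is Lebesgue measurable with μ(K ∩ B(z,R)) ≤ δ μ(B(z,R)), then E satisfies the lower Aikawa condition with exponent α. -/

import Mathlib

open Metric MeasureTheory Set
open scoped ENNReal NNReal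

/-- The effective diameter bound: `diam E`, unless `diam E = 0`, in which case `diam X`. -/
noncomputable def diamBound {X : Type*} [PseudoEMetricSpace X] (E : Set X) : ℝ≥0∞ :=
  haveI := Classical.propDecidable
  if EMetric.diam E = 0 then EMetric.diam (Set.univ : Set X) else EMetric.diam E

/-- `E` satisfies the lower Aikawa condition with exponent `α`. -/
def lowerAikawaCond {X : Type*} [MetricSpace X] [MeasurableSpace X]
    (μ : Measure X) (E : Set X) (α : ℝ) : Prop :=
  ∃ C : ℝ, 0 < C ∧ ∀ z ∈ E, ∀ R : ℝ, 0 < R → ENNReal.ofReal R < diamBound E →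
    (μ (ball z R))⁻¹ * ∫⁻ y in ball z R, ENNReal.ofReal (infDist y E ^ (-α)) ∂μ ≤
      ENNReal.ofReal (C * R ^ (-α))

/-- `E` is a porous set. -/
def IsPorousSet {X : Type*} [MetricSpace X] (E : Set X) : Prop :=
  ∃ C : ℝ, 0 < C ∧ ∀ (x : X) (r : ℝ), 0 < r → ∃ y : X, ball y (C * r) ⊆ ball x r \ E

namespace AikawaProofAux

variable {n : ℕ}

lemma coord_abs_le_dist (x y : EuclideanSpace ℝ (Fin n)) (i : Fin n) :
    |x i - y i| ≤ dist x y := by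
  rw [EuclideanSpace.dist_eq, ← Real.sqrt_sq_eq_abs]
  refine Real.sqrt_le_sqrt ?_
  calc (x i - y i) ^ 2 = dist (x i) (y i) ^ 2 := by rw [Real.dist_eq, sq_abs]
    _ ≤ ∑ j, dist (x j) (y j) ^ 2 :=
      Finset.single_le_sum (f := fun j => dist (x j) (y j) ^ 2)
        (fun j _ => sq_nonneg _) (Finset.mem_univ i)

lemma dist_le_of_coords (x y : EuclideanSpace ℝ (Fin n)) {s : ℝ} (hs : 0 ≤ s)
    (h : ∀ i, |x i - y i| ≤ s) : dist x y ≤ Real.sqrt n * s := by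
  rw [EuclideanSpace.dist_eq]
  have h1 : ∑ i, dist (x i) (y i) ^ 2 ≤ (n : ℝ) * s ^ 2 := by
    calc ∑ i, dist (x i) (y i) ^ 2 ≤ ∑ _i : Fin n, s ^ 2 := by
          refine Finset.sum_le_sum fun i _ => ?_
          rw [Real.dist_eq]
          have := h i
          nlinarith [abs_nonneg (x i - y i)]
      _ = (n : ℝ) * s ^ 2 := by simp [Finset.sum_const]
  calc Real.sqrt (∑ i, dist (x i) (y i) ^ 2) ≤ Real.sqrt ((n : ℝ) * s ^ 2) :=
        Real.sqrt_le_sqrt h1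
    _ = Real.sqrt n * s := by
        rw [Real.sqrt_mul (by positivity), Real.sqrt_sq hs]

def cube (s : ℝ) (k : Fin n → ℤ) : Set (EuclideanSpace ℝ (Fin n)) :=
  {y | ∀ i, (k i : ℝ) * s ≤ y i ∧ y i < ((k i : ℝ) + 1) * s}

lemma cube_eq_preimage (s : ℝ) (k : Fin n → ℤ) :
    cube s k = (MeasurableEquiv.toLp 2 (Fin n → ℝ)).symm ⁻¹'
      (Set.univ.pi fun i => Set.Ico ((k i : ℝ) * s) (((k i : ℝ) + 1) * s)) := by
  ext y
  simp [cube, Set.mem_pi, MeasurableEquiv.coe_toLp_symm]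

lemma measurableSet_cube (s : ℝ) (k : Fin n → ℤ) : MeasurableSet (cube s k) := by
  rw [cube_eq_preimage]
  exact (MeasurableEquiv.toLp 2 (Fin n → ℝ)).symm.measurable
    (MeasurableSet.univ_pi fun i => measurableSet_Ico)

lemma volume_cube {s : ℝ} (hs : 0 ≤ s) (k : Fin n → ℤ) :
    volume (cube s k) = ENNReal.ofReal (s ^ n) := by
  rw [cube_eq_preimage,
    (EuclideanSpace.volume_preserving_symm_measurableEquiv_toLp (Fin n)).measure_preimage
      ((MeasurableSet.univ_pi fun i => measurableSet_Ico).nullMeasurableSet)]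
  rw [volume_pi_pi]
  have h1 : ∀ i : Fin n, volume (Set.Ico ((k i : ℝ) * s) (((k i : ℝ) + 1) * s))
      = ENNReal.ofReal s := by
    intro i
    rw [Real.volume_Ico]
    congr 1
    ring
  simp only [h1, Finset.prod_const, Finset.card_univ, Fintype.card_fin]
  rw [ENNReal.ofReal_pow hs]

lemma mem_cube_floor {s : ℝ} (hs : 0 < s) (y : EuclideanSpace ℝ (Fin n)) :
    y ∈ cube s (fun i => ⌊y i / s⌋) := by
  intro i
  constructor
  · exact (le_div_iff₀ hs).mp (Int.floor_le _)
  · have := Int.lt_floor_add_one (y i / s)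
    calc y i = y i / s * s := by field_simp
      _ < ((⌊y i / s⌋ : ℝ) + 1) * s := by
          apply mul_lt_mul_of_pos_right _ hs
          exact_mod_cast this

lemma cube_disjoint {s : ℝ} (hs : 0 < s) {k k' : Fin n → ℤ} (h : k ≠ k') :
    Disjoint (cube s k) (cube s k') := by
  rw [Set.disjoint_left]
  rintro y hy hy'
  apply h
  funext i
  have h1 := hy i
  have h2 := hy' i
  have e1 : ⌊y i / s⌋ = k i := by
    rw [Int.floor_eq_iff]
    constructor
    · exact (le_div_iff₀ hs).mpr (by linarith [h1.1])
    · rw [div_lt_iff₀ hs]; exact h1.2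
  have e2 : ⌊y i / s⌋ = k' i := by
    rw [Int.floor_eq_iff]
    constructor
    · exact (le_div_iff₀ hs).mpr (by linarith [h2.1])
    · rw [div_lt_iff₀ hs]; exact h2.2
  rw [← e1, e2]

lemma dist_le_of_mem_cube {s : ℝ} (hs : 0 ≤ s) {k : Fin n → ℤ}
    {y y' : EuclideanSpace ℝ (Fin n)} (hy : y ∈ cube s k) (hy' : y' ∈ cube s k) :
    dist y y' ≤ Real.sqrt n * s := by
  apply dist_le_of_coords _ _ hs
  intro i
  have h1 := hy i
  have h2 := hy' i
  have e : ((k i : ℝ) + 1) * s = (k i : ℝ) * s + s := by ring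
  rw [abs_le]
  constructor <;> [linarith [h1.1, h2.2]; linarith [h1.2, h2.1]]

noncomputable def cubeCenter (s : ℝ) (k : Fin n → ℤ) : EuclideanSpace ℝ (Fin n) :=
  WithLp.toLp 2 fun i => (k i : ℝ) * s + s / 2

lemma ball_center_subset_cube {s : ℝ} (hs : 0 < s) (k : Fin n → ℤ) :
    ball (cubeCenter s k) (s / 2) ⊆ cube s k := by
  intro y hy i
  have h := coord_abs_le_dist y (cubeCenter s k) i
  rw [mem_ball] at hy
  have habs : |y i - ((k i : ℝ) * s + s / 2)| < s / 2 := lt_of_le_of_lt h hy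
  rw [abs_lt] at habs
  have e : ((k i : ℝ) + 1) * s = (k i : ℝ) * s + s := by ring
  constructor
  · linarith [habs.1]
  · linarith [habs.2]


/-- volume of the unit ball, as a real number -/
noncomputable def ubv (n : ℕ) : ℝ :=
  (volume (ball (0 : EuclideanSpace ℝ (Fin n)) 1)).toReal

lemma ubv_pos (hn : 0 < n) : 0 < ubv n := by
  apply ENNReal.toReal_pos (measure_ball_pos volume _ one_pos).ne'
  exact measure_ball_lt_top.ne

lemma volume_ball_eq (hn : 0 < n) (z : EuclideanSpace ℝ (Fin n)) {r : ℝ} (hr : 0 ≤ r) :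
    volume (ball z r) = ENNReal.ofReal (r ^ n * ubv n) := by
  haveI : Nontrivial (EuclideanSpace ℝ (Fin n)) :=
    Module.nontrivial_of_finrank_pos (R := ℝ)
      (by rw [finrank_euclideanSpace_fin]; exact hn)
  rw [Measure.addHaar_ball volume z hr, finrank_euclideanSpace_fin,
    ENNReal.ofReal_mul (by positivity), ubv,
    ENNReal.ofReal_toReal measure_ball_lt_top.ne]

/-- closed neighborhood of `E` -/
def nbhd (E : Set (EuclideanSpace ℝ (Fin n))) (t : ℝ) : Set (EuclideanSpace ℝ (Fin n)) :=
  {y | infDist y E ≤ t}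

lemma measurableSet_nbhd (E : Set (EuclideanSpace ℝ (Fin n))) (t : ℝ) :
    MeasurableSet (nbhd E t) :=
  (isClosed_le (continuous_infDist_pt E) continuous_const).measurableSet

section Porous

variable {E : Set (EuclideanSpace ℝ (Fin n))} {C₁ : ℝ}

/-- the per-cube hole estimate -/
lemma cube_hole (hn : 0 < n) (hC₁ : 0 < C₁) (hC₁2 : C₁ ≤ 1 / 2)
    (hpor : ∀ (x : EuclideanSpace ℝ (Fin n)) (r : ℝ), 0 < r →
      ∃ y, ball y (C₁ * r) ⊆ ball x r \ E)
    (hE : E.Nonempty) {s : ℝ} (hs : 0 < s) (k : Fin n → ℤ) :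
    volume (nbhd E (C₁ / 4 * s) ∩ cube s k) ≤
      ENNReal.ofReal ((1 - (C₁ / 4) ^ n * ubv n) * s ^ n) := by
  obtain ⟨y, hy⟩ := hpor (cubeCenter s k) (s / 2) (half_pos hs)
  have hrad : C₁ / 4 * s ≤ C₁ * (s / 2) := by nlinarith [mul_nonneg hC₁.le hs.le]
  have hhole : ball y (C₁ / 4 * s) ⊆ cube s k :=
    (ball_subset_ball hrad).trans
      (hy.trans ((diff_subset).trans (ball_center_subset_cube hs k)))
  have hfar : ∀ w ∈ ball y (C₁ / 4 * s), C₁ / 4 * s < infDist w E := by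
    intro w hw
    rw [mem_ball] at hw
    by_contra hcon
    push_neg at hcon
    have hlt : infDist w E < C₁ * (s / 2) - dist w y := by
      nlinarith [dist_nonneg (x := w) (y := y)]
    obtain ⟨e, heE, he⟩ := (infDist_lt_iff hE).mp hlt
    have heball : e ∈ ball y (C₁ * (s / 2)) := by
      rw [mem_ball]
      calc dist e y ≤ dist e w + dist w y := dist_triangle e w y
        _ < C₁ * (s / 2) := by
            have hew : dist e w = dist w e := dist_comm e w
            linarith
    exact (hy heball).2 heE
  have hsub : nbhd E (C₁ / 4 * s) ∩ cube s k ⊆ cube s k \ ball y (C₁ / 4 * s) := by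
    rintro v ⟨hv1, hv2⟩
    refine ⟨hv2, fun hvb => ?_⟩
    exact absurd hv1 (not_le.mpr (hfar v hvb))
  calc volume (nbhd E (C₁ / 4 * s) ∩ cube s k) ≤ volume (cube s k \ ball y (C₁ / 4 * s)) :=
        measure_mono hsub
    _ = volume (cube s k) - volume (ball y (C₁ / 4 * s)) :=
        measure_diff hhole measurableSet_ball.nullMeasurableSet measure_ball_lt_top.ne
    _ = ENNReal.ofReal (s ^ n) - ENNReal.ofReal ((C₁ / 4 * s) ^ n * ubv n) := by
        rw [volume_cube hs.le,
          volume_ball_eq hn y (mul_nonneg (by linarith) hs.le)]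
    _ = ENNReal.ofReal ((1 - (C₁ / 4) ^ n * ubv n) * s ^ n) := by
        have e : (1 - (C₁ / 4) ^ n * ubv n) * s ^ n
            = s ^ n - (C₁ / 4 * s) ^ n * ubv n := by rw [mul_pow]; ring
        have hq : 0 ≤ (C₁ / 4 * s) ^ n * ubv n :=
          mul_nonneg (pow_nonneg (mul_nonneg (by linarith) hs.le) n) (ubv_pos hn).le
        rw [e, ENNReal.ofReal_sub _ hq]

lemma theta_nonneg (hn : 0 < n) (hC₁ : 0 < C₁) (hC₁2 : C₁ ≤ 1 / 2) :
    0 ≤ 1 - (C₁ / 4) ^ n * ubv n := by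
  have h1 : ball (cubeCenter (n := n) 1 (fun _ => 0)) (1 / 2) ⊆ cube (n := n) 1 (fun _ => 0) :=
    ball_center_subset_cube one_pos _
  have h2 : volume (ball (cubeCenter (n := n) 1 (fun _ => 0)) (1 / 2)) ≤
      volume (cube (n := n) 1 (fun _ => 0)) :=
    measure_mono h1
  rw [volume_ball_eq hn _ (by norm_num), volume_cube zero_le_one] at h2
  have h3 : (1 / 2 : ℝ) ^ n * ubv n ≤ 1 ^ n :=
    (ENNReal.ofReal_le_ofReal_iff (by positivity)).mp h2
  have h4 : (C₁ / 4 : ℝ) ^ n * ubv n ≤ (1 / 2) ^ n * ubv n := by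
    apply mul_le_mul_of_nonneg_right _ (ubv_pos hn).le
    apply pow_le_pow_left₀ (by positivity) (by linarith)
  have : (1:ℝ) ^ n = 1 := one_pow n
  linarith

lemma theta_lt_one (hn : 0 < n) (hC₁ : 0 < C₁) :
    1 - (C₁ / 4) ^ n * ubv n < 1 := by
  have h : 0 < (C₁ / 4) ^ n * ubv n :=
    mul_pos (pow_pos (by positivity) n) (ubv_pos hn)
  linarith


lemma step_lemma (hn : 0 < n) (hC₁ : 0 < C₁) (hC₁2 : C₁ ≤ 1 / 2)
    (hpor : ∀ (x : EuclideanSpace ℝ (Fin n)) (r : ℝ), 0 < r →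
      ∃ y, ball y (C₁ * r) ⊆ ball x r \ E)
    (hE : E.Nonempty) {s : ℝ} (hs : 0 < s)
    (z : EuclideanSpace ℝ (Fin n)) (R : ℝ) :
    volume (nbhd E (C₁ / 4 * s) ∩ ball z R) ≤
      ENNReal.ofReal (1 - (C₁ / 4) ^ n * ubv n) *
        volume (nbhd E (2 * Real.sqrt n * s) ∩ ball z (R + Real.sqrt n * s)) := by
  have hθ0 : 0 ≤ 1 - (C₁ / 4) ^ n * ubv n := theta_nonneg hn hC₁ hC₁2
  have hsqn : 1 ≤ Real.sqrt n := by
    rw [show (1 : ℝ) = Real.sqrt 1 by simp]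
    exact Real.sqrt_le_sqrt (by exact_mod_cast hn)
  set T : Set (Fin n → ℤ) :=
    {k | (cube s k ∩ (nbhd E (C₁ / 4 * s) ∩ ball z R)).Nonempty} with hT
  have hcover : nbhd E (C₁ / 4 * s) ∩ ball z R ⊆
      ⋃ k ∈ T, nbhd E (C₁ / 4 * s) ∩ cube s k := by
    intro y hy
    exact Set.mem_biUnion (show (fun i => ⌊y i / s⌋) ∈ T from ⟨y, mem_cube_floor hs y, hy⟩)
      ⟨hy.1, mem_cube_floor hs y⟩
  have hsubT : ∀ k ∈ T, cube s k ⊆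
      nbhd E (2 * Real.sqrt n * s) ∩ ball z (R + Real.sqrt n * s) := by
    intro k hk y hyc
    obtain ⟨y₀, hy₀c, hy₀A, hy₀B⟩ := hk
    have hd : dist y y₀ ≤ Real.sqrt n * s := dist_le_of_mem_cube hs.le hyc hy₀c
    constructor
    · show infDist y E ≤ 2 * Real.sqrt n * s
      have h2 : infDist y₀ E ≤ C₁ / 4 * s := hy₀A
      have h1 : infDist y E ≤ infDist y₀ E + dist y y₀ := infDist_le_infDist_add_dist
      have h3 : C₁ / 4 * s ≤ Real.sqrt n * s :=
        mul_le_mul_of_nonneg_right (by linarith) hs.le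
      linarith
    · rw [mem_ball]
      have hB := mem_ball.mp hy₀B
      calc dist y z ≤ dist y y₀ + dist y₀ z := dist_triangle _ _ _
        _ < R + Real.sqrt n * s := by linarith
  calc volume (nbhd E (C₁ / 4 * s) ∩ ball z R)
      ≤ volume (⋃ k ∈ T, nbhd E (C₁ / 4 * s) ∩ cube s k) := measure_mono hcover
    _ ≤ ∑' k : T, volume (nbhd E (C₁ / 4 * s) ∩ cube s (k : Fin n → ℤ)) :=
        measure_biUnion_le volume T.to_countable _
    _ ≤ ∑' _k : T, ENNReal.ofReal (1 - (C₁ / 4) ^ n * ubv n) * ENNReal.ofReal (s ^ n) := by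
        refine ENNReal.tsum_le_tsum fun k => ?_
        rw [← ENNReal.ofReal_mul hθ0]
        exact cube_hole hn hC₁ hC₁2 hpor hE hs k
    _ = ENNReal.ofReal (1 - (C₁ / 4) ^ n * ubv n) *
          ∑' k : T, volume (cube s (k : Fin n → ℤ)) := by
        rw [ENNReal.tsum_mul_left]
        congr 1
        refine tsum_congr fun k => ?_
        rw [volume_cube hs.le]
    _ = ENNReal.ofReal (1 - (C₁ / 4) ^ n * ubv n) * volume (⋃ k ∈ T, cube s k) := by
        congr 1
        exact (measure_biUnion T.to_countable
          (fun k _ k' _ hne => cube_disjoint hs hne)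
          (fun k _ => measurableSet_cube s k)).symm
    _ ≤ ENNReal.ofReal (1 - (C₁ / 4) ^ n * ubv n) *
          volume (nbhd E (2 * Real.sqrt n * s) ∩ ball z (R + Real.sqrt n * s)) :=
        mul_le_mul_right (measure_mono (Set.iUnion₂_subset hsubT)) _

/-- accumulated enlargement sequence -/
def ee (a q : ℝ) : ℕ → ℝ
  | 0 => 0
  | m + 1 => ee a q m + a * q ^ (m + 1)

lemma ee_nonneg {a q : ℝ} (ha : 0 ≤ a) (hq : 0 ≤ q) : ∀ m, 0 ≤ ee a q m
  | 0 => le_refl 0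
  | m + 1 => add_nonneg (ee_nonneg ha hq m) (mul_nonneg ha (pow_nonneg hq _))

lemma ee_eq {a q : ℝ} (hq : q ≠ 1) : ∀ m, ee a q m = a * q * (1 - q ^ m) / (1 - q)
  | 0 => by simp [ee]
  | m + 1 => by
      have h1 : (1 : ℝ) - q ≠ 0 := fun h => hq (by linarith)
      rw [ee, ee_eq hq m]
      field_simp
      ring

lemma ee_le {a q : ℝ} (ha : 0 ≤ a) (hq : 0 < q) (hq2 : q ≤ 1 / 2) (m : ℕ) :
    ee a q m ≤ a := by
  have h1 : (0 : ℝ) < 1 - q := by linarith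
  rw [ee_eq (by linarith) m]
  rw [div_le_iff₀ h1]
  have t1 : 0 ≤ a * q * q ^ m := by positivity
  have t2 : a * q ≤ a * (1 - q) := mul_le_mul_of_nonneg_left (by linarith) ha
  nlinarith [t1, t2]

lemma iter_lemma (hn : 0 < n) (hC₁ : 0 < C₁) (hC₁2 : C₁ ≤ 1 / 2)
    (hpor : ∀ (x : EuclideanSpace ℝ (Fin n)) (r : ℝ), 0 < r →
      ∃ y, ball y (C₁ * r) ⊆ ball x r \ E)
    (hE : E.Nonempty) {s : ℝ} (hs : 0 < s) (m : ℕ)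
    (z : EuclideanSpace ℝ (Fin n)) (R : ℝ) :
    volume (nbhd E (C₁ / 4 * ((C₁ / (8 * Real.sqrt n)) ^ m * s)) ∩ ball z R) ≤
      ENNReal.ofReal (1 - (C₁ / 4) ^ n * ubv n) ^ m *
        volume (ball z (R + ee (Real.sqrt n) (C₁ / (8 * Real.sqrt n)) m * s)) := by
  have hsqn : 1 ≤ Real.sqrt n := by
    rw [show (1 : ℝ) = Real.sqrt 1 by simp]
    exact Real.sqrt_le_sqrt (by exact_mod_cast hn)
  have hsq0 : (0 : ℝ) < Real.sqrt n := by linarith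
  set q : ℝ := C₁ / (8 * Real.sqrt n) with hqdef
  have hq0 : 0 < q := by positivity
  induction m generalizing z R with
  | zero =>
      simp only [pow_zero, one_mul, ee]
      calc volume (nbhd E (C₁ / 4 * s) ∩ ball z R) ≤ volume (ball z R) :=
            measure_mono inter_subset_right
        _ = volume (ball z (R + 0 * s)) := by norm_num
  | succ m ih =>
      have hsm : 0 < q ^ (m + 1) * s := by positivity
      have key := step_lemma hn hC₁ hC₁2 hpor hE hsm z R
      have hthr : 2 * Real.sqrt n * (q ^ (m + 1) * s) = C₁ / 4 * (q ^ m * s) := by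
        have h : 2 * Real.sqrt n * q = C₁ / 4 := by
          rw [hqdef, mul_div_assoc', div_eq_div_iff (by positivity) (by norm_num)]
          ring
        rw [pow_succ]
        linear_combination (q ^ m * s) * h
      rw [hthr] at key
      have ih' := ih z (R + Real.sqrt n * (q ^ (m + 1) * s))
      have hrad : R + Real.sqrt n * (q ^ (m + 1) * s)
          + ee (Real.sqrt n) q m * s = R + ee (Real.sqrt n) q (m + 1) * s := by
        show _ = R + (ee (Real.sqrt n) q m + Real.sqrt n * q ^ (m + 1)) * s
        ring
      rw [hrad] at ih'
      calc volume (nbhd E (C₁ / 4 * (q ^ (m + 1) * s)) ∩ ball z R)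
          ≤ ENNReal.ofReal (1 - (C₁ / 4) ^ n * ubv n) *
              (ENNReal.ofReal (1 - (C₁ / 4) ^ n * ubv n) ^ m *
                volume (ball z (R + ee (Real.sqrt n) q (m + 1) * s))) :=
            key.trans (mul_le_mul_right ih' _)
        _ = ENNReal.ofReal (1 - (C₁ / 4) ^ n * ubv n) ^ (m + 1) *
              volume (ball z (R + ee (Real.sqrt n) q (m + 1) * s)) := by
            rw [pow_succ, mul_comm (ENNReal.ofReal _ ^ m) (ENNReal.ofReal _), mul_assoc]


lemma decay_lemma (hn : 0 < n) (hC₁ : 0 < C₁) (hC₁2 : C₁ ≤ 1 / 2)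
    (hpor : ∀ (x : EuclideanSpace ℝ (Fin n)) (r : ℝ), 0 < r →
      ∃ y, ball y (C₁ * r) ⊆ ball x r \ E)
    (hE : E.Nonempty) {δ : ℝ} (hδ : 0 < δ) :
    ∃ c : ℝ, 0 < c ∧ ∀ (z : EuclideanSpace ℝ (Fin n)) (R : ℝ), 0 < R →
      volume (nbhd E (c * R) ∩ ball z R) ≤ ENNReal.ofReal δ * volume (ball z R) := by
  have hsqn : 1 ≤ Real.sqrt n := by
    rw [show (1 : ℝ) = Real.sqrt 1 by simp]
    exact Real.sqrt_le_sqrt (by exact_mod_cast hn)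
  have hsq0 : (0 : ℝ) < Real.sqrt n := by linarith
  set q : ℝ := C₁ / (8 * Real.sqrt n) with hqdef
  have hq0 : 0 < q := by positivity
  have hq2 : q ≤ 1 / 2 := by
    have h1 : q ≤ C₁ / 8 := by
      apply div_le_div_of_nonneg_left hC₁.le (by norm_num)
      nlinarith
    linarith
  have hθ0 : 0 ≤ 1 - (C₁ / 4) ^ n * ubv n := theta_nonneg hn hC₁ hC₁2
  have hθ1 : 1 - (C₁ / 4) ^ n * ubv n < 1 := theta_lt_one hn hC₁
  obtain ⟨m, hm⟩ := exists_pow_lt_of_lt_one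
    (show (0 : ℝ) < δ / 2 ^ n by positivity) hθ1
  refine ⟨C₁ / 4 * q ^ m / Real.sqrt n, by positivity, fun z R hR => ?_⟩
  have hs : 0 < R / Real.sqrt n := by positivity
  have hthr : C₁ / 4 * q ^ m / Real.sqrt n * R = C₁ / 4 * (q ^ m * (R / Real.sqrt n)) := by
    field_simp
  have h1 := iter_lemma hn hC₁ hC₁2 hpor hE hs m z R
  rw [hthr]
  refine h1.trans ?_
  have hee : ee (Real.sqrt n) q m * (R / Real.sqrt n) ≤ R := by
    calc ee (Real.sqrt n) q m * (R / Real.sqrt n)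
        ≤ Real.sqrt n * (R / Real.sqrt n) :=
          mul_le_mul_of_nonneg_right (ee_le hsq0.le hq0 hq2 m) (by positivity)
      _ = R := by field_simp
  have hball : ball z (R + ee (Real.sqrt n) q m * (R / Real.sqrt n)) ⊆ ball z (2 * R) :=
    ball_subset_ball (by linarith)
  have hvol2 : volume (ball z (2 * R)) = ENNReal.ofReal ((2 : ℝ) ^ n) * volume (ball z R) := by
    rw [volume_ball_eq hn z (by linarith), volume_ball_eq hn z hR.le,
      ← ENNReal.ofReal_mul (by positivity)]
    congr 1
    rw [mul_pow]
    ring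
  have hfin : (1 - (C₁ / 4) ^ n * ubv n) ^ m * 2 ^ n ≤ δ := by
    have h2 : (0 : ℝ) < 2 ^ n := by positivity
    exact ((lt_div_iff₀ h2).mp hm).le
  calc ENNReal.ofReal (1 - (C₁ / 4) ^ n * ubv n) ^ m *
        volume (ball z (R + ee (Real.sqrt n) q m * (R / Real.sqrt n)))
      ≤ ENNReal.ofReal (1 - (C₁ / 4) ^ n * ubv n) ^ m * volume (ball z (2 * R)) :=
        mul_le_mul_right (measure_mono hball) _
    _ = ENNReal.ofReal ((1 - (C₁ / 4) ^ n * ubv n) ^ m * 2 ^ n) * volume (ball z R) := by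
        rw [hvol2, ← ENNReal.ofReal_pow hθ0, ← mul_assoc,
          ← ENNReal.ofReal_mul (pow_nonneg hθ0 m)]
    _ ≤ ENNReal.ofReal δ * volume (ball z R) :=
        mul_le_mul_left (ENNReal.ofReal_le_ofReal hfin) _

end Porous

end AikawaProofAux

/-- Let `E ⊆ ℝⁿ` be nonempty and `0 ≤ α < n`. Assume `E` is porous and
`dist(·,E)^{-α}` is locally integrable. If for every `ε > 0` there is `δ > 0` such that
`⨍_{B(z,R)} 1_K dist(·,E)^{-α} ≤ ε R^{-α}` whenever `z ∈ E`, `R > 0` and `K` is measurable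
with `μ(K ∩ B(z,R)) ≤ δ μ(B(z,R))`, then `E` satisfies the lower Aikawa condition with
exponent `α`. -/
theorem small_sets_estimate_implies_lowerAikawa {n : ℕ} (α : ℝ) (hα0 : 0 ≤ α) (hαn : α < (n : ℝ))
    (E : Set (EuclideanSpace ℝ (Fin n))) (hE : E.Nonempty)
    (hpor : IsPorousSet E)
    (hloc : LocallyIntegrable (fun y => infDist y E ^ (-α)) volume)
    (hB : ∀ ε : ℝ, 0 < ε → ∃ δ : ℝ, 0 < δ ∧
      ∀ z ∈ E, ∀ R : ℝ, 0 < R →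
        ∀ K : Set (EuclideanSpace ℝ (Fin n)), MeasurableSet K →
          volume (K ∩ ball z R) ≤ ENNReal.ofReal δ * volume (ball z R) →
          (volume (ball z R))⁻¹ *
              ∫⁻ y in ball z R ∩ K, ENNReal.ofReal (infDist y E ^ (-α)) ∂volume ≤
            ENNReal.ofReal (ε * R ^ (-α))) :
    lowerAikawaCond volume E α := by
  classical
  have hn : 0 < n := by
    have h : (0 : ℝ) < n := lt_of_le_of_lt hα0 hαn
    exact_mod_cast h
  obtain ⟨C₀, hC₀, hpor₀⟩ := hpor
  have hC₁ : 0 < min C₀ (1 / 2) := lt_min hC₀ (by norm_num)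
  have hC₁2 : min C₀ (1 / 2) ≤ 1 / 2 := min_le_right _ _
  have hpor₁ : ∀ (x : EuclideanSpace ℝ (Fin n)) (r : ℝ), 0 < r →
      ∃ y, ball y (min C₀ (1 / 2) * r) ⊆ ball x r \ E := by
    intro x r hr
    obtain ⟨y, hy⟩ := hpor₀ x r hr
    exact ⟨y, (ball_subset_ball
      (mul_le_mul_of_nonneg_right (min_le_left _ _) hr.le)).trans hy⟩
  obtain ⟨δ, hδ, HB⟩ := hB 1 one_pos
  obtain ⟨c, hc, hdec⟩ := AikawaProofAux.decay_lemma hn hC₁ hC₁2 hpor₁ hE hδ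
  refine ⟨1 + c ^ (-α), by positivity, fun z hz R hR _ => ?_⟩
  have hKm : MeasurableSet (AikawaProofAux.nbhd E (c * R)) :=
    AikawaProofAux.measurableSet_nbhd E _
  have hKvol : volume (AikawaProofAux.nbhd E (c * R) ∩ ball z R) ≤
      ENNReal.ofReal δ * volume (ball z R) := hdec z R hR
  have hnear := HB z hz R hR (AikawaProofAux.nbhd E (c * R)) hKm hKvol
  have hsplit : ∫⁻ y in ball z R, ENNReal.ofReal (infDist y E ^ (-α)) ∂volume
      = (∫⁻ y in ball z R ∩ AikawaProofAux.nbhd E (c * R),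
          ENNReal.ofReal (infDist y E ^ (-α)) ∂volume)
        + ∫⁻ y in ball z R \ AikawaProofAux.nbhd E (c * R),
            ENNReal.ofReal (infDist y E ^ (-α)) ∂volume :=
    (lintegral_inter_add_diff _ (ball z R) hKm).symm
  have hcR : 0 < c * R := mul_pos hc hR
  have hfar : ∫⁻ y in ball z R \ AikawaProofAux.nbhd E (c * R),
      ENNReal.ofReal (infDist y E ^ (-α)) ∂volume
      ≤ ENNReal.ofReal (c ^ (-α) * R ^ (-α)) * volume (ball z R) := by
    have hb : ∀ y ∈ ball z R \ AikawaProofAux.nbhd E (c * R),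
        ENNReal.ofReal (infDist y E ^ (-α)) ≤ ENNReal.ofReal ((c * R) ^ (-α)) := by
      intro y hy
      apply ENNReal.ofReal_le_ofReal
      have hyK : ¬ infDist y E ≤ c * R := hy.2
      exact Real.rpow_le_rpow_of_nonpos hcR (not_le.mp hyK).le (by linarith)
    calc ∫⁻ y in ball z R \ AikawaProofAux.nbhd E (c * R),
          ENNReal.ofReal (infDist y E ^ (-α)) ∂volume
        ≤ ∫⁻ _y in ball z R \ AikawaProofAux.nbhd E (c * R),
            ENNReal.ofReal ((c * R) ^ (-α)) ∂volume :=
          setLIntegral_mono measurable_const hb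
      _ = ENNReal.ofReal ((c * R) ^ (-α)) *
            volume (ball z R \ AikawaProofAux.nbhd E (c * R)) := setLIntegral_const _ _
      _ ≤ ENNReal.ofReal (c ^ (-α) * R ^ (-α)) * volume (ball z R) := by
          rw [← Real.mul_rpow hc.le hR.le]
          exact mul_le_mul_right (measure_mono diff_subset) _
  have hvol0 : volume (ball z R) ≠ 0 := (measure_ball_pos volume z hR).ne'
  have hvolt : volume (ball z R) ≠ ⊤ := measure_ball_lt_top.ne
  have hfar' : (volume (ball z R))⁻¹ * ∫⁻ y in ball z R \ AikawaProofAux.nbhd E (c * R),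
      ENNReal.ofReal (infDist y E ^ (-α)) ∂volume
      ≤ ENNReal.ofReal (c ^ (-α) * R ^ (-α)) := by
    calc (volume (ball z R))⁻¹ * ∫⁻ y in ball z R \ AikawaProofAux.nbhd E (c * R),
          ENNReal.ofReal (infDist y E ^ (-α)) ∂volume
        ≤ (volume (ball z R))⁻¹ *
            (ENNReal.ofReal (c ^ (-α) * R ^ (-α)) * volume (ball z R)) :=
          mul_le_mul_right hfar _
      _ = ENNReal.ofReal (c ^ (-α) * R ^ (-α)) := by
          rw [mul_comm (ENNReal.ofReal _) (volume (ball z R)), ← mul_assoc,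
            ENNReal.inv_mul_cancel hvol0 hvolt, one_mul]
  calc (volume (ball z R))⁻¹ * ∫⁻ y in ball z R,
        ENNReal.ofReal (infDist y E ^ (-α)) ∂volume
      = (volume (ball z R))⁻¹ * ∫⁻ y in ball z R ∩ AikawaProofAux.nbhd E (c * R),
          ENNReal.ofReal (infDist y E ^ (-α)) ∂volume
        + (volume (ball z R))⁻¹ * ∫⁻ y in ball z R \ AikawaProofAux.nbhd E (c * R),
            ENNReal.ofReal (infDist y E ^ (-α)) ∂volume := by
        rw [hsplit, mul_add]
    _ ≤ ENNReal.ofReal (1 * R ^ (-α)) + ENNReal.ofReal (c ^ (-α) * R ^ (-α)) :=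
        add_le_add hnear hfar'
    _ = ENNReal.ofReal ((1 + c ^ (-α)) * R ^ (-α)) := by
        rw [← ENNReal.ofReal_add (by positivity) (by positivity)]
        congr 1
        ring
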